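/- Let S be a Bernstein set in the closed interval [0, 1/2], regarded as a subset of [0, 1]. Then in the Cantor game on [0, 1] with target set S, player B does not have a winning strategy, even though [0, 1] − S contains a generalized Cantor set, contains a nonempty perfect set, and is dense in [0, 1]. -/

import Mathlib

open Filter Set

/-- Data generating a generalized Cantor set: closed intervals
`I_{i₁,…,iₙ} = [c l, d l]` indexed by nonempty finite binary sequences
(`l : List Bool`, with the last entry the most recently added index),
inside a closed interval `[lo, hi]`, with diameters controlled by a strictly
decreasing positive sequence `e` tending to `0`. -/
structure GenCantor where
  lo : ℝ
  hi : ℝ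
  lo_lt_hi : lo < hi
  e : ℕ → ℝ
  e_pos : ∀ n : ℕ, 0 < e n
  e_anti : StrictAnti e
  e_lim : Filter.Tendsto e Filter.atTop (nhds 0)
  c : List Bool → ℝ
  d : List Bool → ℝ
  diam_pos : ∀ l : List Bool, l ≠ [] → 0 < d l - c l
  diam_lt : ∀ l : List Bool, l ≠ [] → d l - c l < e l.length
  root_sub : ∀ i : Bool, Set.Icc (c [i]) (d [i]) ⊆ Set.Icc lo hi
  nested : ∀ l : List Bool, l ≠ [] → ∀ i : Bool,
    Set.Icc (c (l ++ [i])) (d (l ++ [i])) ⊆ Set.Icc (c l) (d l)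
  disj : ∀ l : List Bool,
    Set.Icc (c (l ++ [false])) (d (l ++ [false])) ∩
      Set.Icc (c (l ++ [true])) (d (l ++ [true])) = ∅

/-- The generalized Cantor set generated by the data `G`:
`C = ⋂_{n ≥ 1} ⋃_{i₁,…,iₙ} I_{i₁,…,iₙ}`. -/
def GenCantor.C (G : GenCantor) : Set ℝ :=
  ⋂ n : ℕ, ⋃ l ∈ {l : List Bool | l.length = n + 1}, Set.Icc (G.c l) (G.d l)

/-- A set of reals is a generalized Cantor set if it is generated by some data. -/
def IsGenCantorSet (C : Set ℝ) : Prop := ∃ G : GenCantor, G.C = C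

/-- The length-`(n+1)` initial segment `[s 0, …, s n]` of a binary sequence. -/
def prefixSeq (s : ℕ → Bool) (n : ℕ) : List Bool := List.ofFn fun i : Fin (n + 1) => s i

/-- A set `P ⊆ ℝ` is perfect if it is closed and each of its points is a
limit point of `P`. -/
def PerfectSet (P : Set ℝ) : Prop := IsClosed P ∧ ∀ x ∈ P, x ∈ closure (P \ {x})

/-- A valid history for player A before A's move number `n+1`:
moves `a 0 = a₀ < a 1 < ⋯ < a n < b n < ⋯ < b 1 < b 0 = b₀`. -/
def ValidHistA (a₀ b₀ : ℝ) {n : ℕ} (a b : Fin (n + 1) → ℝ) : Prop :=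
  a 0 = a₀ ∧ b 0 = b₀ ∧ StrictMono a ∧ StrictAnti b ∧ a (Fin.last n) < b (Fin.last n)

/-- A strategy for player A in the Cantor game on `[a₀, b₀]`:
functions `f n` producing the move `a (n+1)` from the history
`(a 0, b 0, …, a n, b n)`, with `a n < f n a b < b n` on valid histories. -/
structure StratA (a₀ b₀ : ℝ) where
  f : (n : ℕ) → (Fin (n + 1) → ℝ) → (Fin (n + 1) → ℝ) → ℝ
  valid : ∀ (n : ℕ) (a b : Fin (n + 1) → ℝ), ValidHistA a₀ b₀ a b →
    a (Fin.last n) < f n a b ∧ f n a b < b (Fin.last n)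

/-- A valid history for player B before B's move number `n+1`:
`a 0 = a₀ < a 1 < ⋯ < a (n+1) < b n < ⋯ < b 1 < b 0 = b₀`. -/
def ValidHistB (a₀ b₀ : ℝ) {n : ℕ} (a : Fin (n + 2) → ℝ) (b : Fin (n + 1) → ℝ) : Prop :=
  a 0 = a₀ ∧ b 0 = b₀ ∧ StrictMono a ∧ StrictAnti b ∧ a (Fin.last (n + 1)) < b (Fin.last n)

/-- A strategy for player B in the Cantor game on `[a₀, b₀]`:
functions `g n` producing the move `b (n+1)` from the history
`(a 0, b 0, …, a n, b n, a (n+1))`, with `a (n+1) < g n a b < b n` on valid histories. -/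
structure StratB (a₀ b₀ : ℝ) where
  g : (n : ℕ) → (Fin (n + 2) → ℝ) → (Fin (n + 1) → ℝ) → ℝ
  valid : ∀ (n : ℕ) (a : Fin (n + 2) → ℝ) (b : Fin (n + 1) → ℝ), ValidHistB a₀ b₀ a b →
    a (Fin.last (n + 1)) < g n a b ∧ g n a b < b (Fin.last n)

/-- A play of the Cantor game on `[a₀, b₀]`:
`a (n-1) < a n < b n < b (n-1)` for all `n ≥ 1`. -/
def IsPlay (a₀ b₀ : ℝ) (a b : ℕ → ℝ) : Prop :=
  a 0 = a₀ ∧ b 0 = b₀ ∧ ∀ n : ℕ, a n < a (n + 1) ∧ a (n + 1) < b (n + 1) ∧ b (n + 1) < b n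

/-- A play is consistent with a strategy for A if each of A's moves is given by
the strategy applied to the preceding history. -/
def ConsistentA {a₀ b₀ : ℝ} (σ : StratA a₀ b₀) (a b : ℕ → ℝ) : Prop :=
  ∀ n : ℕ, a (n + 1) = σ.f n (fun i : Fin (n + 1) => a i) (fun i : Fin (n + 1) => b i)

/-- A play is consistent with a strategy for B if each of B's moves is given by
the strategy applied to the preceding history. -/
def ConsistentB {a₀ b₀ : ℝ} (σ : StratB a₀ b₀) (a b : ℕ → ℝ) : Prop :=
  ∀ n : ℕ, b (n + 1) = σ.g n (fun i : Fin (n + 2) => a i) (fun i : Fin (n + 1) => b i)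

/-- The limit set of a strategy for player A: all limits `lim aₙ` over plays
consistent with the strategy. -/
def limitSetA {a₀ b₀ : ℝ} (σ : StratA a₀ b₀) : Set ℝ :=
  {x | ∃ a b : ℕ → ℝ, IsPlay a₀ b₀ a b ∧ ConsistentA σ a b ∧
    Filter.Tendsto a Filter.atTop (nhds x)}

/-- The limit set of a strategy for player B: all limits `lim aₙ` over plays
consistent with the strategy. -/
def limitSetB {a₀ b₀ : ℝ} (σ : StratB a₀ b₀) : Set ℝ :=
  {x | ∃ a b : ℕ → ℝ, IsPlay a₀ b₀ a b ∧ ConsistentB σ a b ∧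
    Filter.Tendsto a Filter.atTop (nhds x)}

/-- A strategy for A is winning for target set `S` iff its limit set lies in `S`. -/
def WinningA {a₀ b₀ : ℝ} (σ : StratA a₀ b₀) (S : Set ℝ) : Prop := limitSetA σ ⊆ S

/-- A strategy for B is winning for target set `S` iff its limit set lies in
`[a₀, b₀] − S`. -/
def WinningB {a₀ b₀ : ℝ} (σ : StratB a₀ b₀) (S : Set ℝ) : Prop :=
  limitSetB σ ⊆ Set.Icc a₀ b₀ \ S

/-- `B` is a Bernstein set in `X ⊆ ℝ` (with its subspace topology) if `B ⊆ X` and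
neither `B` nor `X − B` contains a set that is uncountable and closed in `X`. -/
def IsBernsteinIn (X B : Set ℝ) : Prop :=
  B ⊆ X ∧
    (¬ ∃ T : Set ℝ, T ⊆ B ∧ ¬ T.Countable ∧ IsClosed (Subtype.val ⁻¹' T : Set X)) ∧
    (¬ ∃ T : Set ℝ, T ⊆ X \ B ∧ ¬ T.Countable ∧ IsClosed (Subtype.val ⁻¹' T : Set X))

/-- The set of right condensation points of `S` in `[a₀, b₀]`. -/
def rightCondPts (a₀ b₀ : ℝ) (S : Set ℝ) : Set ℝ :=
  {x ∈ Set.Icc a₀ b₀ | ∀ ε > 0, ¬ (Set.Ioo x (x + ε) ∩ S).Countable}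

namespace Stmt17Aux

noncomputable section

open Filter Set

/-- Game state after some rounds: depth `n`, history `a`, `b` (junk beyond `n`),
and the "effective interval" `(al, be)` to which A confines future moves. -/
structure St where
  n : ℕ
  a : ℕ → ℝ
  b : ℕ → ℝ
  al : ℝ
  be : ℝ

def root : St := ⟨0, fun _ => 0, fun _ => 1, 0, 1/2⟩

variable (σ : StratB (0:ℝ) 1)

def gam (s : St) : ℝ := (s.al + s.be)/2

def mov (s : St) (i : Bool) : ℝ := if i then (gam s + s.be)/2 else (s.al + gam s)/2

def capp (s : St) (i : Bool) : ℝ := if i then s.be else gam s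

def newa (s : St) (i : Bool) : ℕ → ℝ := Function.update s.a (s.n+1) (mov s i)

def resp (s : St) (i : Bool) : ℝ :=
  σ.g s.n (fun k : Fin (s.n+2) => newa s i k) (fun k : Fin (s.n+1) => s.b k)

def step (s : St) (i : Bool) : St :=
  ⟨s.n+1, newa s i, Function.update s.b (s.n+1) (resp σ s i), mov s i,
    min (resp σ s i) (capp s i)⟩

def node : List Bool → St
  | [] => root
  | i :: l => step σ (node l) i

@[simp] lemma node_nil : node σ [] = root := rfl

@[simp] lemma node_cons (i : Bool) (l : List Bool) :
    node σ (i :: l) = step σ (node σ l) i := rfl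

structure Good (s : St) : Prop where
  a0 : s.a 0 = 0
  b0 : s.b 0 = 1
  amono : ∀ k < s.n, s.a k < s.a (k+1)
  banti : ∀ k < s.n, s.b (k+1) < s.b k
  al_eq : s.al = s.a s.n
  al_nonneg : 0 ≤ s.al
  albe : s.al < s.be
  be_le : s.be ≤ s.b s.n
  be_half : s.be ≤ 1/2
  len : s.be - s.al ≤ (1/2)^s.n
  consist : ∀ k < s.n,
    s.b (k+1) = σ.g k (fun j : Fin (k+2) => s.a j) (fun j : Fin (k+1) => s.b j)

lemma good_root : Good σ root := by
  constructor <;> norm_num [root]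

lemma gam_lt {s : St} (h : Good σ s) : s.al < gam s ∧ gam s < s.be := by
  unfold gam; constructor <;> linarith [h.albe]

lemma mov_mem {s : St} (h : Good σ s) (i : Bool) : s.al < mov s i ∧ mov s i < capp s i := by
  obtain ⟨h1, h2⟩ := gam_lt σ h
  unfold mov capp; cases i <;> simp <;> constructor <;> linarith

lemma capp_le {s : St} (h : Good σ s) (i : Bool) : capp s i ≤ s.be := by
  obtain ⟨h1, h2⟩ := gam_lt σ h
  unfold capp; cases i <;> simp <;> linarith

lemma mov_cap_len {s : St} (h : Good σ s) (i : Bool) : capp s i - mov s i ≤ (s.be - s.al)/4 := by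
  unfold mov capp gam; cases i <;> simp <;> linarith [h.albe]

lemma newa_eq_of_le {s : St} (i : Bool) {k : ℕ} (hk : k ≤ s.n) : newa s i k = s.a k := by
  unfold newa
  rw [Function.update_of_ne (by omega)]

/-- The history before B's response in `step` is a valid B-history. -/
lemma validB {s : St} (h : Good σ s) (i : Bool) :
    ValidHistB 0 1 (fun k : Fin (s.n+2) => newa s i k) (fun k : Fin (s.n+1) => s.b k) := by
  obtain ⟨hm1, hm2⟩ := mov_mem σ h i
  have hcap := capp_le σ h i
  refine ⟨?_, ?_, ?_, ?_, ?_⟩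
  · show newa s i ((0 : Fin (s.n+2)) : ℕ) = 0
    rw [show ((0 : Fin (s.n+2)) : ℕ) = 0 from rfl, newa_eq_of_le _ (Nat.zero_le _), h.a0]
  · show s.b ((0 : Fin (s.n+1)) : ℕ) = 1
    rw [show ((0 : Fin (s.n+1)) : ℕ) = 0 from rfl, h.b0]
  · rw [Fin.strictMono_iff_lt_succ]
    intro j
    simp only [Fin.coe_castSucc, Fin.val_succ]
    rcases Nat.lt_or_ge (j : ℕ) (s.n) with hj | hj
    · rw [newa_eq_of_le _ (by omega), newa_eq_of_le _ (by omega)]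
      exact h.amono _ hj
    · have hj' : (j : ℕ) = s.n := by omega
      rw [newa_eq_of_le _ (by omega), hj']
      rw [show s.n + 1 = s.n + 1 from rfl]
      unfold newa
      rw [Function.update_self]
      rw [← h.al_eq]; exact hm1
  · rw [Fin.strictAnti_iff_succ_lt]
    intro j
    simp only [Fin.coe_castSucc, Fin.val_succ]
    exact h.banti _ j.isLt
  · simp only [Fin.val_last]
    unfold newa
    rw [Function.update_self]
    calc mov s i < capp s i := hm2
    _ ≤ s.be := hcap
    _ ≤ s.b s.n := h.be_le

lemma resp_mem {s : St} (h : Good σ s) (i : Bool) :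
    mov s i < resp σ s i ∧ resp σ s i < s.b s.n := by
  have hv := σ.valid s.n _ _ (validB σ h i)
  constructor
  · have := hv.1
    simpa [Fin.val_last, newa, Function.update_self, resp] using this
  · have := hv.2
    simpa [Fin.val_last, resp] using this

lemma good_step {s : St} (h : Good σ s) (i : Bool) : Good σ (step σ s i) := by
  obtain ⟨hm1, hm2⟩ := mov_mem σ h i
  obtain ⟨hr1, hr2⟩ := resp_mem σ h i
  have hcap := capp_le σ h i
  have hlen := mov_cap_len σ h i
  constructor
  case a0 => show newa s i 0 = 0; rw [newa_eq_of_le _ (Nat.zero_le _)]; exact h.a0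
  case b0 =>
    show Function.update s.b (s.n+1) (resp σ s i) 0 = 1
    rw [Function.update_of_ne (by omega)]; exact h.b0
  case amono =>
    intro k hk
    show newa s i k < newa s i (k+1)
    rcases Nat.lt_or_ge k s.n with hj | hj
    · rw [newa_eq_of_le _ (by omega), newa_eq_of_le _ (by omega)]
      exact h.amono _ hj
    · have hj' : k = s.n := by simp [step] at hk; omega
      subst hj'
      rw [newa_eq_of_le _ le_rfl]
      unfold newa; rw [Function.update_self, ← h.al_eq]
      exact hm1
  case banti =>
    intro k hk
    show Function.update s.b (s.n+1) (resp σ s i) (k+1) < Function.update s.b (s.n+1) (resp σ s i) k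
    rcases Nat.lt_or_ge k s.n with hj | hj
    · rw [Function.update_of_ne (by omega), Function.update_of_ne (by omega)]
      exact h.banti _ hj
    · have hj' : k = s.n := by simp [step] at hk; omega
      subst hj'
      rw [Function.update_self, Function.update_of_ne (by omega)]
      exact hr2
  case al_eq =>
    show mov s i = newa s i (s.n+1)
    unfold newa; rw [Function.update_self]
  case al_nonneg =>
    show (0:ℝ) ≤ mov s i
    linarith [h.al_nonneg]
  case albe =>
    show mov s i < min (resp σ s i) (capp s i)
    exact lt_min hr1 hm2
  case be_le =>
    show min (resp σ s i) (capp s i) ≤ Function.update s.b (s.n+1) (resp σ s i) (s.n+1)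
    rw [Function.update_self]; exact min_le_left _ _
  case be_half =>
    show min (resp σ s i) (capp s i) ≤ 1/2
    calc min (resp σ s i) (capp s i) ≤ capp s i := min_le_right _ _
    _ ≤ s.be := hcap
    _ ≤ 1/2 := h.be_half
  case len =>
    show min (resp σ s i) (capp s i) - mov s i ≤ (1/2)^(s.n+1)
    have h1 : min (resp σ s i) (capp s i) ≤ capp s i := min_le_right _ _
    have h2 : (s.be - s.al)/4 ≤ (1/2)^s.n / 4 := by linarith [h.len]
    calc min (resp σ s i) (capp s i) - mov s i ≤ capp s i - mov s i := by linarith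
    _ ≤ (s.be - s.al)/4 := hlen
    _ ≤ (1/2)^s.n / 4 := h2
    _ ≤ (1/2)^(s.n+1) := by
        rw [pow_succ]
        have hp : (0:ℝ) < (1/2)^s.n := by positivity
        nlinarith
  case consist =>
    intro k hk
    have hk' : k < s.n + 1 := hk
    show Function.update s.b (s.n+1) (resp σ s i) (k+1)
      = σ.g k (fun j : Fin (k+2) => newa s i j)
          (fun j : Fin (k+1) => Function.update s.b (s.n+1) (resp σ s i) j)
    rcases Nat.lt_or_ge k s.n with hj | hj
    · rw [Function.update_of_ne (by omega)]
      rw [h.consist k hj]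
      congr 1
      · funext j
        exact (newa_eq_of_le _ (by omega : (j:ℕ) ≤ s.n)).symm
      · funext j
        rw [Function.update_of_ne (by have := j.isLt; omega)]
    · have hj' : k = s.n := by omega
      subst hj'
      rw [Function.update_self]
      show resp σ s i = _
      unfold resp
      congr 1
      funext j
      rw [Function.update_of_ne (by have := j.isLt; omega)]

lemma node_n (l : List Bool) : (node σ l).n = l.length := by
  induction l with
  | nil => rfl
  | cons i l ih =>
    rw [node_cons]
    show (node σ l).n + 1 = l.length + 1
    rw [ih]

lemma good_node (l : List Bool) : Good σ (node σ l) := by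
  induction l with
  | nil => exact good_root σ
  | cons i l ih => rw [node_cons]; exact good_step σ ih i

end

end Stmt17Aux
namespace Stmt17Aux

noncomputable section

open Filter Set

variable (σ : StratB (0:ℝ) 1)

def br (s : ℕ → Bool) : ℕ → List Bool
  | 0 => []
  | n+1 => s n :: br s n

@[simp] lemma br_zero (s : ℕ → Bool) : br s 0 = [] := rfl
@[simp] lemma br_succ (s : ℕ → Bool) (n : ℕ) : br s (n+1) = s n :: br s n := rfl

@[simp] lemma br_len (s : ℕ → Bool) (n : ℕ) : (br s n).length = n := by
  induction n with
  | zero => rfl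
  | succ n ih => simp [ih]

lemma node_br_n (s : ℕ → Bool) (n : ℕ) : (node σ (br s n)).n = n := by
  rw [node_n, br_len]

def pa (s : ℕ → Bool) (n : ℕ) : ℝ := (node σ (br s n)).a n
def pb (s : ℕ → Bool) (n : ℕ) : ℝ := (node σ (br s n)).b n
def pal (s : ℕ → Bool) (n : ℕ) : ℝ := (node σ (br s n)).al
def pbe (s : ℕ → Bool) (n : ℕ) : ℝ := (node σ (br s n)).be

lemma step_a_eq {s : St} (i : Bool) {k : ℕ} (hk : k ≤ s.n) : (step σ s i).a k = s.a k :=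
  newa_eq_of_le i hk

lemma step_b_eq {s : St} (i : Bool) {k : ℕ} (hk : k ≤ s.n) : (step σ s i).b k = s.b k := by
  show Function.update s.b (s.n+1) (resp σ s i) k = s.b k
  rw [Function.update_of_ne (by omega)]

lemma node_agree (s : ℕ → Bool) :
    ∀ m k, k ≤ m → (node σ (br s m)).a k = pa σ s k ∧ (node σ (br s m)).b k = pb σ s k := by
  intro m
  induction m with
  | zero =>
    intro k hk
    have : k = 0 := Nat.le_zero.mp hk
    subst this; exact ⟨rfl, rfl⟩
  | succ m ih =>
    intro k hk
    rcases Nat.lt_or_ge k (m+1) with h | h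
    · have hk' : k ≤ m := by omega
      have hn : (node σ (br s m)).n = m := node_br_n σ s m
      rw [br_succ, node_cons]
      constructor
      · rw [step_a_eq σ _ (by omega)]; exact (ih k hk').1
      · rw [step_b_eq σ _ (by omega)]; exact (ih k hk').2
    · have : k = m + 1 := by omega
      subst this; exact ⟨rfl, rfl⟩

lemma pal_eq_pa (s : ℕ → Bool) (n : ℕ) : pal σ s n = pa σ s n := by
  have h := (good_node σ (br s n)).al_eq
  rw [node_br_n] at h
  exact h

lemma pa_lt_succ (s : ℕ → Bool) (n : ℕ) : pa σ s n < pa σ s (n+1) := by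
  have hg := good_node σ (br s (n+1))
  have hn := node_br_n σ s (n+1)
  have := hg.amono n (by omega)
  rwa [(node_agree σ s (n+1) n (by omega)).1, (node_agree σ s (n+1) (n+1) le_rfl).1] at this

lemma pa_mono (s : ℕ → Bool) : Monotone (pa σ s) :=
  monotone_nat_of_le_succ fun n => (pa_lt_succ σ s n).le

lemma pb_succ_lt (s : ℕ → Bool) (n : ℕ) : pb σ s (n+1) < pb σ s n := by
  have hg := good_node σ (br s (n+1))
  have hn := node_br_n σ s (n+1)
  have := hg.banti n (by omega)
  rwa [(node_agree σ s (n+1) (n+1) le_rfl).2, (node_agree σ s (n+1) n (by omega)).2] at this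

lemma pa_lt_pb (s : ℕ → Bool) (n : ℕ) : pa σ s n < pb σ s n := by
  have hg := good_node σ (br s n)
  have hn := node_br_n σ s n
  have h1 : pal σ s n < pbe σ s n := hg.albe
  have h2 : pbe σ s n ≤ pb σ s n := by
    have := hg.be_le; rw [hn] at this; exact this
  rw [pal_eq_pa] at h1
  linarith

lemma pal_lt_pbe (s : ℕ → Bool) (n : ℕ) : pal σ s n < pbe σ s n := (good_node σ (br s n)).albe

lemma pbe_half (s : ℕ → Bool) (n : ℕ) : pbe σ s n ≤ 1/2 := (good_node σ (br s n)).be_half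

lemma pbe_antitone (s : ℕ → Bool) : Antitone (pbe σ s) := by
  apply antitone_nat_of_succ_le
  intro n
  show (node σ (br s (n+1))).be ≤ (node σ (br s n)).be
  rw [br_succ, node_cons]
  show min _ _ ≤ _
  calc min (resp σ (node σ (br s n)) (s n)) (capp (node σ (br s n)) (s n))
      ≤ capp (node σ (br s n)) (s n) := min_le_right _ _
    _ ≤ (node σ (br s n)).be := capp_le σ (good_node σ (br s n)) (s n)

lemma pa_le_half (s : ℕ → Bool) (n : ℕ) : pa σ s n ≤ 1/2 := by
  have := pal_lt_pbe σ s n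
  rw [pal_eq_pa] at this
  linarith [pbe_half σ s n]

def lim (s : ℕ → Bool) : ℝ := ⨆ n, pa σ s n

lemma pa_bdd (s : ℕ → Bool) : BddAbove (Set.range (pa σ s)) := by
  refine ⟨1/2, ?_⟩
  rintro x ⟨n, rfl⟩
  exact pa_le_half σ s n

lemma tendsto_pa (s : ℕ → Bool) : Tendsto (pa σ s) atTop (nhds (lim σ s)) :=
  tendsto_atTop_ciSup (pa_mono σ s) (pa_bdd σ s)

lemma pa_le_lim (s : ℕ → Bool) (n : ℕ) : pa σ s n ≤ lim σ s :=
  le_ciSup (pa_bdd σ s) n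

lemma lim_le_pbe (s : ℕ → Bool) (n : ℕ) : lim σ s ≤ pbe σ s n := by
  apply ciSup_le
  intro m
  rcases Nat.lt_or_ge m n with h | h
  · calc pa σ s m ≤ pa σ s n := pa_mono σ s h.le
     _ = pal σ s n := (pal_eq_pa σ s n).symm
     _ ≤ pbe σ s n := (pal_lt_pbe σ s n).le
  · calc pa σ s m = pal σ s m := (pal_eq_pa σ s m).symm
     _ ≤ pbe σ s m := (pal_lt_pbe σ s m).le
     _ ≤ pbe σ s n := pbe_antitone σ s h

lemma lim_nonneg (s : ℕ → Bool) : 0 ≤ lim σ s := by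
  have h0 : pa σ s 0 = 0 := rfl
  have := pa_le_lim σ s 0
  linarith

lemma lim_le_half (s : ℕ → Bool) : lim σ s ≤ 1/2 :=
  le_trans (lim_le_pbe σ s 0) (pbe_half σ s 0)

/-- The play along branch `s` is a play consistent with `σ` converging to `lim σ s`. -/
lemma lim_mem_limitSet (s : ℕ → Bool) : lim σ s ∈ limitSetB σ := by
  refine ⟨pa σ s, pb σ s, ⟨rfl, rfl, ?_⟩, ?_, tendsto_pa σ s⟩
  · intro n
    exact ⟨pa_lt_succ σ s n, pa_lt_pb σ s (n+1), pb_succ_lt σ s n⟩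
  · intro n
    have hg := good_node σ (br s (n+1))
    have hn := node_br_n σ s (n+1)
    have hc := hg.consist n (by omega)
    rw [(node_agree σ s (n+1) (n+1) le_rfl).2] at hc
    rw [hc]
    congr 1
    · funext j
      exact (node_agree σ s (n+1) j (by have := j.isLt; omega)).1
    · funext j
      exact (node_agree σ s (n+1) j (by have := j.isLt; omega)).2

lemma br_eq_of_prefix {s t : ℕ → Bool} {n : ℕ} (h : ∀ k < n, s k = t k) :
    br s n = br t n := by
  induction n with
  | zero => rfl
  | succ n ih =>
    rw [br_succ, br_succ, h n (by omega), ih (fun k hk => h k (by omega))]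

lemma lim_sep {s t : ℕ → Bool} {n : ℕ} (hpre : ∀ k < n, s k = t k)
    (hs : s n = false) (ht : t n = true) : lim σ s < lim σ t := by
  set P := node σ (br s n) with hP
  have hg := good_node σ (br s n)
  have hbt : br t n = br s n := (br_eq_of_prefix hpre).symm
  have h1 : pbe σ s (n+1) ≤ gam P := by
    show (node σ (br s (n+1))).be ≤ gam P
    rw [br_succ, node_cons, hs]
    exact le_trans (min_le_right _ _) (le_of_eq rfl)
  have h2 : gam P < pal σ t (n+1) := by
    show gam P < (node σ (br t (n+1))).al
    rw [br_succ, node_cons, ht, hbt]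
    show gam P < mov P true
    have := gam_lt σ hg
    unfold mov
    simp only [if_true]
    linarith [this.2]
  calc lim σ s ≤ pbe σ s (n+1) := lim_le_pbe σ s (n+1)
    _ ≤ gam P := h1
    _ < pal σ t (n+1) := h2
    _ = pa σ t (n+1) := pal_eq_pa σ t (n+1)
    _ ≤ lim σ t := pa_le_lim σ t (n+1)

lemma lim_injective : Function.Injective (lim σ) := by
  intro s t hst
  by_contra hne
  have hex : ∃ n, s n ≠ t n := by
    by_contra h
    push_neg at h
    exact hne (funext h)
  set n := Nat.find hex with hn
  have hne' : s n ≠ t n := Nat.find_spec hex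
  have hpre : ∀ k < n, s k = t k := fun k hk => by
    by_contra h
    exact (Nat.find_min hex hk) h
  cases hsn : s n <;> cases htn : t n
  · exact hne' (hsn.trans htn.symm)
  · exact absurd hst (ne_of_lt (lim_sep σ hpre hsn htn))
  · exact absurd hst.symm (ne_of_lt (lim_sep σ (fun k hk => (hpre k hk).symm) htn hsn))
  · exact hne' (hsn.trans htn.symm)

lemma lim_dist {s t : ℕ → Bool} {n : ℕ} (hpre : ∀ k < n, s k = t k) :
    |lim σ s - lim σ t| ≤ (1/2)^n := by
  have hbt : br t n = br s n := (br_eq_of_prefix hpre).symm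
  have hg := good_node σ (br s n)
  have hlen : pbe σ s n - pal σ s n ≤ (1/2)^n := by
    have := hg.len
    rwa [node_br_n] at this
  have h1 : pal σ s n ≤ lim σ s := by
    rw [pal_eq_pa]; exact pa_le_lim σ s n
  have h2 : lim σ s ≤ pbe σ s n := lim_le_pbe σ s n
  have h3 : pal σ t n ≤ lim σ t := by
    rw [pal_eq_pa]; exact pa_le_lim σ t n
  have h4 : lim σ t ≤ pbe σ t n := lim_le_pbe σ t n
  have e1 : pal σ t n = pal σ s n := by unfold pal; rw [hbt]
  have e2 : pbe σ t n = pbe σ s n := by unfold pbe; rw [hbt]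
  rw [e1] at h3; rw [e2] at h4
  rw [abs_sub_le_iff]
  constructor <;> linarith

lemma lim_continuous : Continuous (lim σ) := by
  rw [continuous_iff_continuousAt]
  intro s
  rw [ContinuousAt, Metric.tendsto_nhds]
  intro ε hε
  obtain ⟨n, hn⟩ := exists_pow_lt_of_lt_one hε (by norm_num : (1:ℝ)/2 < 1)
  have hmem : {t : ℕ → Bool | ∀ k < n, t k = s k} ∈ nhds s := by
    have : {t : ℕ → Bool | ∀ k < n, t k = s k} = ⋂ k ∈ Finset.range n, {t : ℕ → Bool | t k = s k} := by
      ext t; simp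
    rw [this]
    rw [Filter.biInter_finset_mem]
    intro k _
    have ho : IsOpen {t : ℕ → Bool | t k = s k} := by
      have : {t : ℕ → Bool | t k = s k} = (fun t : ℕ → Bool => t k) ⁻¹' {s k} := rfl
      rw [this]
      exact (isOpen_discrete _).preimage (continuous_apply k)
    exact ho.mem_nhds rfl
  filter_upwards [hmem] with t hpre
  rw [Real.dist_eq]
  calc |lim σ t - lim σ s| ≤ (1/2)^n := lim_dist σ (fun k hk => hpre k hk)
    _ < ε := hn

lemma not_countable_range_lim : ¬ (Set.range (lim σ)).Countable := by
  intro hc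
  have h1 : (Set.univ : Set (ℕ → Bool)).Countable := by
    have := hc.preimage (lim_injective σ)
    refine this.mono ?_
    intro x _
    exact ⟨x, rfl⟩
  have h2 : Countable (ℕ → Bool) := Set.countable_univ_iff.mp h1
  have h3 : (Cardinal.mk (ℕ → Bool)) ≤ Cardinal.aleph0 := Cardinal.mk_le_aleph0_iff.mpr h2
  have h4 : Cardinal.mk (ℕ → Bool) = Cardinal.continuum := by
    rw [Cardinal.mk_arrow]; simp
  rw [h4] at h3
  exact absurd (lt_of_lt_of_le Cardinal.aleph0_lt_continuum h3) (lt_irrefl _)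

lemma isClosed_range_lim : IsClosed (Set.range (lim σ)) :=
  (isCompact_range (lim_continuous σ)).isClosed

end

end Stmt17Aux
namespace Stmt17Aux

noncomputable section

open Filter Set

def cfun (l : List Bool) : ℝ :=
  3/5 + (3/20) * ∑ k ∈ Finset.range l.length, (if l.getD k false then (1/4:ℝ)^k else 0)

def dfun (l : List Bool) : ℝ := cfun l + (1/5) * (1/4)^l.length

lemma cfun_append (l : List Bool) (i : Bool) :
    cfun (l ++ [i]) = cfun l + (if i then (3/20) * (1/4)^l.length else 0) := by
  unfold cfun
  rw [List.length_append, List.length_singleton, Finset.sum_range_succ]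
  have h1 : ∀ k ∈ Finset.range l.length,
      (if (l ++ [i]).getD k false then (1/4:ℝ)^k else 0) = (if l.getD k false then (1/4:ℝ)^k else 0) := by
    intro k hk
    rw [List.getD_append _ _ _ _ (Finset.mem_range.mp hk)]
  rw [Finset.sum_congr rfl h1]
  have h2 : (l ++ [i]).getD l.length false = i := by
    simp [List.getD_append_right]
  rw [h2]
  cases i <;> simp <;> ring

lemma cfun_le_append (l : List Bool) (i : Bool) : cfun l ≤ cfun (l ++ [i]) := by
  rw [cfun_append]
  have : (0:ℝ) ≤ (1/4)^l.length := by positivity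
  cases i <;> simp <;> linarith

lemma dfun_append_le (l : List Bool) (i : Bool) : dfun (l ++ [i]) ≤ dfun l := by
  unfold dfun
  rw [cfun_append, List.length_append, List.length_singleton, pow_succ]
  have : (0:ℝ) ≤ (1/4)^l.length := by positivity
  cases i <;> simp <;> linarith

def theGenCantor : GenCantor where
  lo := 3/5
  hi := 4/5
  lo_lt_hi := by norm_num
  e := fun n => (1/4)^n
  e_pos := fun n => by positivity
  e_anti := fun m n h => pow_lt_pow_right_of_lt_one₀ (by norm_num) (by norm_num) h
  e_lim := tendsto_pow_atTop_nhds_zero_of_lt_one (by norm_num) (by norm_num)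
  c := cfun
  d := dfun
  diam_pos := fun l _ => by
    unfold dfun
    have : (0:ℝ) < (1/4)^l.length := by positivity
    linarith
  diam_lt := fun l _ => by
    unfold dfun
    have : (0:ℝ) < (1/4)^l.length := by positivity
    linarith
  root_sub := fun i => by
    have h : cfun [i] = 3/5 + (if i then (3/20:ℝ) else 0) := by
      have := cfun_append [] i
      simpa [cfun] using this
    apply Set.Icc_subset_Icc
    · rw [h]; cases i <;> norm_num
    · show dfun [i] ≤ 4/5
      unfold dfun
      rw [h]; cases i <;> norm_num
  nested := fun l _ i => by
    apply Set.Icc_subset_Icc (cfun_le_append l i) (dfun_append_le l i)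
  disj := fun l => by
    rw [Set.eq_empty_iff_forall_notMem]
    rintro x ⟨⟨_, hx1⟩, ⟨hx2, _⟩⟩
    have h1 : dfun (l ++ [false]) < cfun (l ++ [true]) := by
      unfold dfun
      rw [cfun_append, cfun_append, List.length_append, List.length_singleton, pow_succ]
      have : (0:ℝ) < (1/4)^l.length := by positivity
      norm_num
      linarith
    linarith

lemma theGenCantor_sub : theGenCantor.C ⊆ Set.Icc (3/5 : ℝ) (4/5) := by
  intro x hx
  have h0 := Set.mem_iInter.mp hx 0
  simp only [Set.mem_iUnion] at h0
  obtain ⟨l, hl, hmem⟩ := h0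
  obtain ⟨i, rfl⟩ := List.length_eq_one_iff.mp hl
  exact theGenCantor.root_sub i hmem

lemma not_countable_Icc {u v : ℝ} (h : u < v) : ¬ (Set.Icc u v).Countable := by
  intro hc
  have h1 := Set.countable_coe_iff.mpr hc
  have h2 := Cardinal.mk_le_aleph0_iff.mpr h1
  rw [Cardinal.mk_Icc_real h] at h2
  exact absurd (lt_of_lt_of_le Cardinal.aleph0_lt_continuum h2) (lt_irrefl _)

end

end Stmt17Aux
/-- For a Bernstein set `S` in `[0, 1/2]`, viewed inside `[0, 1]`,
player B has no winning strategy in the Cantor game on `[0, 1]` with target `S`,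
even though `[0, 1] − S` contains a generalized Cantor set, contains a nonempty
perfect set, and is dense in `[0, 1]`. -/
theorem stmt17 (S : Set ℝ) (hS : IsBernsteinIn (Set.Icc (0 : ℝ) (1 / 2)) S) :
    (¬ ∃ σ : StratB (0 : ℝ) 1, WinningB σ S) ∧
    (∃ C : Set ℝ, IsGenCantorSet C ∧ C ⊆ Set.Icc (0 : ℝ) 1 \ S) ∧
    (∃ P : Set ℝ, P.Nonempty ∧ PerfectSet P ∧ P ⊆ Set.Icc (0 : ℝ) 1 \ S) ∧
    Set.Icc (0 : ℝ) 1 ⊆ closure (Set.Icc (0 : ℝ) 1 \ S) := by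
  obtain ⟨hsub, hS1, hS2⟩ := hS
  have hIccSub : Set.Icc (3/5 : ℝ) (4/5) ⊆ Set.Icc (0 : ℝ) 1 \ S := by
    intro y hy
    refine ⟨⟨by linarith [hy.1], by linarith [hy.2]⟩, fun hyS => ?_⟩
    have := (hsub hyS).2
    linarith [hy.1]
  refine ⟨?_, ?_, ?_, ?_⟩
  · rintro ⟨σ, hσ⟩
    apply hS2
    refine ⟨Set.range (Stmt17Aux.lim σ), ?_, Stmt17Aux.not_countable_range_lim σ,
      (Stmt17Aux.isClosed_range_lim σ).preimage continuous_subtype_val⟩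
    rintro x ⟨s, rfl⟩
    have hw := hσ (Stmt17Aux.lim_mem_limitSet σ s)
    exact ⟨⟨Stmt17Aux.lim_nonneg σ s, Stmt17Aux.lim_le_half σ s⟩, hw.2⟩
  · exact ⟨Stmt17Aux.theGenCantor.C, ⟨Stmt17Aux.theGenCantor, rfl⟩,
      fun x hx => hIccSub (Stmt17Aux.theGenCantor_sub hx)⟩
  · refine ⟨Set.Icc (3/5) (4/5), ⟨3/5, by norm_num⟩, ⟨isClosed_Icc, ?_⟩, hIccSub⟩
    intro x hx
    rcases lt_or_eq_of_le hx.2 with h | h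
    · have hsub2 : Set.Ioo x (4/5:ℝ) ⊆ Set.Icc (3/5:ℝ) (4/5) \ {x} := by
        rintro y ⟨hy1, hy2⟩
        refine ⟨⟨le_trans hx.1 hy1.le, hy2.le⟩, ?_⟩
        simp only [Set.mem_singleton_iff]
        intro hxy; rw [hxy] at hy1; exact lt_irrefl _ hy1
      have hcl : x ∈ closure (Set.Ioo x (4/5:ℝ)) := by
        rw [closure_Ioo (ne_of_lt h)]
        exact ⟨le_rfl, h.le⟩
      exact closure_mono hsub2 hcl
    · have hlt : (3/5:ℝ) < x := by rw [h]; norm_num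
      have hsub2 : Set.Ioo (3/5:ℝ) x ⊆ Set.Icc (3/5:ℝ) (4/5) \ {x} := by
        rintro y ⟨hy1, hy2⟩
        refine ⟨⟨hy1.le, le_trans hy2.le hx.2⟩, ?_⟩
        simp only [Set.mem_singleton_iff]
        intro hxy; rw [hxy] at hy2; exact lt_irrefl _ hy2
      have hcl : x ∈ closure (Set.Ioo (3/5:ℝ) x) := by
        rw [closure_Ioo (ne_of_lt hlt)]
        exact ⟨hlt.le, le_rfl⟩
      exact closure_mono hsub2 hcl
  · intro x hx
    rw [Metric.mem_closure_iff]
    intro ε hε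
    obtain ⟨u, v, huv, hJx, hJ01⟩ : ∃ u v : ℝ, u < v ∧ (∀ y ∈ Set.Icc u v, dist x y < ε) ∧
        Set.Icc u v ⊆ Set.Icc (0:ℝ) 1 := by
      rcases lt_or_eq_of_le hx.2 with h | h
      · refine ⟨x, min (x + ε/2) 1, lt_min (by linarith) h, ?_, ?_⟩
        · intro y hy
          have h2 : y ≤ x + ε/2 := le_trans hy.2 (min_le_left _ _)
          rw [Real.dist_eq, abs_lt]
          constructor <;> linarith [hy.1]
        · intro y hy
          exact ⟨le_trans hx.1 hy.1, le_trans hy.2 (min_le_right _ _)⟩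
      · refine ⟨max (1 - ε/2) 0, 1, ?_, ?_, ?_⟩
        · apply max_lt <;> linarith
        · intro y hy
          have h2 : 1 - ε/2 ≤ y := le_trans (le_max_left _ _) hy.1
          rw [Real.dist_eq, abs_lt, h]
          constructor <;> linarith [hy.2]
        · intro y hy
          exact ⟨le_trans (le_max_right _ _) hy.1, hy.2⟩
    obtain ⟨y, hy, hyS⟩ : ∃ y ∈ Set.Icc u v, y ∉ S := by
      by_contra hcon
      push_neg at hcon
      apply hS1
      refine ⟨Set.Icc u v, hcon, Stmt17Aux.not_countable_Icc huv,
        isClosed_Icc.preimage continuous_subtype_val⟩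
    exact ⟨y, ⟨hJ01 hy, hyS⟩, hJx y hy⟩
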